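/- arXiv:1409.1155 — 2 statements merged into one kernel-verified Lean document; each statement's English description precedes it below -/
import Mathlib

section
/- Let A ∈ L^∞(Ω, M_{αβ}) be stationary ergodic coefficients, ξ ∈ ℝ^d a unit vector, and take ξ' = ξ. For T > 0 let φ_T, φ'_T be the regularized corrector and dual regularized corrector, and A_T := A_{T,1} the associated approximation of the homogenized coefficients. Then ξ·A_Tξ = ½E[(ξ+∇φ_T)·A(ξ+∇φ_T)] + ½E[(ξ+∇φ'_T)·A(ξ+∇φ'_T)] + (2T)^{-1}E[(φ_T − φ'_T)²], where all fields are evaluated at 0. In particular ξ·A_Tξ ≥ α for every T > 0, i.e. A_T is coercive, even for non-symmetric A. -/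
open MeasureTheory Filter Set
open scoped Topology

noncomputable section

def dotp {d : ℕ} (v w : Fin d → ℝ) : ℝ := ∑ i, v i * w i

def mvec {d : ℕ} (M : Fin d → Fin d → ℝ) (v : Fin d → ℝ) : Fin d → ℝ := fun i => ∑ j, M i j * v j

def mtrans {d : ℕ} (M : Fin d → Fin d → ℝ) : Fin d → Fin d → ℝ := fun i j => M j i

def MemEll {d : ℕ} (α β : ℝ) (M : Fin d → Fin d → ℝ) : Prop :=
  (∀ ξ : Fin d → ℝ, α * dotp ξ ξ ≤ dotp ξ (mvec M ξ)) ∧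
  (∀ ξ : Fin d → ℝ, dotp (mvec M ξ) (mvec M ξ) ≤ β ^ 2 * dotp ξ ξ)

def mdist {d : ℕ} (M N : Fin d → Fin d → ℝ) : ℝ := Real.sqrt (∑ i, ∑ j, (M i j - N i j) ^ 2)

def rich {X : Type*} [AddCommGroup X] [Module ℝ X] (φ : ℝ → X) : ℕ → ℝ → X
  | 0, T => φ T
  | 1, T => φ T
  | (k + 2), T =>
      (((2:ℝ) ^ (k + 1) - 1)⁻¹) •
        (((2:ℝ) ^ (k + 1)) • rich φ (k + 1) (2 * T) - rich φ (k + 1) T)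

/-- `i`-th standard basis vector of `ℝ^d`. -/
def evec {d : ℕ} (i : Fin d) : Fin d → ℝ := fun j => if j = i then 1 else 0

def IsL2Deriv {Ω : Type*} [MeasurableSpace Ω] {d : ℕ} (μ : Measure Ω)
    (θ : (Fin d → ℝ) → Ω → Ω) (ψ : Ω → ℝ) (i : Fin d) (gi : Ω → ℝ) : Prop :=
  Tendsto (fun h : ℝ => ∫ ω, ((ψ (θ (h • evec i) ω) - ψ ω) / h - gi ω) ^ 2 ∂μ)
    (𝓝[≠] (0:ℝ)) (𝓝 0)

def InH {Ω : Type*} [MeasurableSpace Ω] {d : ℕ} (μ : Measure Ω)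
    (θ : (Fin d → ℝ) → Ω → Ω) (ψ : Ω → ℝ) (g : Ω → Fin d → ℝ) : Prop :=
  MemLp ψ 2 μ ∧ (∀ i, MemLp (fun ω => g ω i) 2 μ) ∧
    ∀ i, IsL2Deriv μ θ ψ i fun ω => g ω i

def IsRegCorrector {Ω : Type*} [MeasurableSpace Ω] {d : ℕ} (μ : Measure Ω)
    (θ : (Fin d → ℝ) → Ω → Ω) (B : Ω → Fin d → Fin d → ℝ)
    (ζ : Fin d → ℝ) (T : ℝ) (φ : Ω → ℝ) (g : Ω → Fin d → ℝ) : Prop :=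
  InH μ θ φ g ∧
    ∀ ψ gψ, InH μ θ ψ gψ →
      ∫ ω, (T⁻¹ * φ ω * ψ ω + dotp (gψ ω) (mvec (B ω) (ζ + g ω))) ∂μ = 0

def ErgodicGroup {Ω : Type*} [MeasurableSpace Ω] {d : ℕ} (μ : Measure Ω)
    (θ : (Fin d → ℝ) → Ω → Ω) : Prop :=
  (∀ ω, θ 0 ω = ω) ∧
  (∀ x y ω, θ (x + y) ω = θ x (θ y ω)) ∧
  (∀ x, MeasurePreserving (θ x) μ μ) ∧
  Measurable (fun p : Ω × (Fin d → ℝ) => θ p.2 p.1) ∧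
  (∀ F : Set Ω, MeasurableSet F → (∀ x, θ x '' F ⊆ F) → μ F = 0 ∨ μ F = 1)

def IsCorrectorGrad {Ω : Type*} [MeasurableSpace Ω] {d : ℕ} (μ : Measure Ω)
    (GT : ℝ → Ω → Fin d → ℝ) (Φ : Ω → Fin d → ℝ) : Prop :=
  (∀ i, MemLp (fun ω => Φ ω i) 2 μ) ∧ (∀ i, ∫ ω, Φ ω i ∂μ = 0) ∧
    ∀ ψ : Ω → ℝ, MemLp ψ 2 μ → ∀ i,
      Tendsto (fun T : ℝ => ∫ ω, ψ ω * GT T ω i ∂μ) atTop (𝓝 (∫ ω, ψ ω * Φ ω i ∂μ))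

section Helpers

variable {Ω : Type*} [MeasurableSpace Ω] {μ : Measure Ω} {d : ℕ}

lemma dotp_add_left (v w u : Fin d → ℝ) : dotp (v + w) u = dotp v u + dotp w u := by
  simp [dotp, add_mul, Finset.sum_add_distrib]

lemma dotp_add_right (v w u : Fin d → ℝ) : dotp u (v + w) = dotp u v + dotp u w := by
  simp [dotp, mul_add, Finset.sum_add_distrib]

lemma dotp_comm (v w : Fin d → ℝ) : dotp v w = dotp w v := by
  simp [dotp, mul_comm]

lemma mvec_add (M : Fin d → Fin d → ℝ) (v w : Fin d → ℝ) :
    mvec M (v + w) = mvec M v + mvec M w := by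
  funext i; simp [mvec, mul_add, Finset.sum_add_distrib]

lemma dotp_mtrans (M : Fin d → Fin d → ℝ) (u v : Fin d → ℝ) :
    dotp u (mvec (mtrans M) v) = dotp v (mvec M u) := by
  simp only [dotp, mvec, mtrans, Finset.mul_sum]
  rw [Finset.sum_comm]
  apply Finset.sum_congr rfl; intro j _
  apply Finset.sum_congr rfl; intro i _
  ring

lemma dotp_self_nonneg (v : Fin d → ℝ) : 0 ≤ dotp v v :=
  Finset.sum_nonneg fun i _ => mul_self_nonneg _

lemma mul_int {f g : Ω → ℝ} (hf : MemLp f 2 μ) (hg : MemLp g 2 μ) :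
    Integrable (fun ω => f ω * g ω) μ := by
  refine Integrable.mono' (hf.integrable_sq.add hg.integrable_sq)
    (hf.aestronglyMeasurable.mul hg.aestronglyMeasurable) (ae_of_all _ fun ω => ?_)
  simp only [Pi.add_apply, Real.norm_eq_abs, abs_mul]
  nlinarith [sq_nonneg (|f ω| - |g ω|), sq_abs (f ω), sq_abs (g ω),
    abs_nonneg (f ω), abs_nonneg (g ω)]

lemma sq_integral_le [IsProbabilityMeasure μ] {f : Ω → ℝ} (hf : MemLp f 2 μ) :
    (∫ ω, f ω ∂μ) ^ 2 ≤ ∫ ω, (f ω) ^ 2 ∂μ := by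
  set m := ∫ ω, f ω ∂μ with hm
  have h1 : Integrable f μ := hf.integrable one_le_two
  have h2 := hf.integrable_sq
  have h0 : 0 ≤ ∫ ω, (f ω - m) ^ 2 ∂μ := integral_nonneg fun ω => sq_nonneg _
  have hexp : ∫ ω, (f ω - m) ^ 2 ∂μ = (∫ ω, (f ω) ^ 2 ∂μ) - m ^ 2 := by
    have he : ∀ ω, (f ω - m) ^ 2 = f ω ^ 2 - 2 * m * f ω + m ^ 2 := fun ω => by ring
    simp_rw [he]
    have hI : Integrable (fun ω => f ω ^ 2 - 2 * m * f ω) μ := h2.sub (h1.const_mul _)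
    have hI2 : Integrable (fun ω => 2 * m * f ω) μ := h1.const_mul _
    rw [integral_add hI (integrable_const _),
      integral_sub h2 hI2, integral_const_mul, integral_const]
    simp [← hm]; ring
  linarith

lemma entries_bound {M : Fin d → Fin d → ℝ} {α β : ℝ} (hβ : 0 ≤ β) (h : MemEll α β M)
    (i j : Fin d) : |M i j| ≤ β := by
  have h2 := h.2 (evec j)
  have he : dotp (evec j) (evec j) = 1 := by simp [dotp, evec]
  have hm : ∀ k, mvec M (evec j) k = M k j := by
    intro k; simp [mvec, evec]
  have hdd : dotp (mvec M (evec j)) (mvec M (evec j)) = ∑ k, (M k j) ^ 2 := by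
    simp [dotp, hm, sq]
  rw [he, hdd, mul_one] at h2
  have hsingle : (M i j) ^ 2 ≤ β ^ 2 := by
    calc (M i j) ^ 2 ≤ ∑ k, (M k j) ^ 2 :=
          Finset.single_le_sum (f := fun k => (M k j) ^ 2) (fun k _ => sq_nonneg _)
            (Finset.mem_univ i)
      _ ≤ β ^ 2 := h2
  nlinarith [abs_nonneg (M i j), sq_abs (M i j)]

lemma grad_mean_zero [IsProbabilityMeasure μ] {θ : (Fin d → ℝ) → Ω → Ω}
    (hmp : ∀ x, MeasurePreserving (θ x) μ μ) {ψ : Ω → ℝ} {g : Ω → Fin d → ℝ}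
    (h : InH μ θ ψ g) (i : Fin d) : ∫ ω, g ω i ∂μ = 0 := by
  obtain ⟨hψ, hg, hder⟩ := h
  set m := ∫ ω, g ω i ∂μ with hm
  have key : ∀ h' : ℝ, h' ≠ 0 →
      m ^ 2 ≤ ∫ ω, ((ψ (θ (h' • evec i) ω) - ψ ω) / h' - g ω i) ^ 2 ∂μ := by
    intro h' hh'
    have hψθ : MemLp (fun ω => ψ (θ (h' • evec i) ω)) 2 μ :=
      hψ.comp_measurePreserving (hmp _)
    have hF : MemLp (fun ω => (ψ (θ (h' • evec i) ω) - ψ ω) / h' - g ω i) 2 μ := by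
      have := ((hψθ.sub hψ).const_mul (h'⁻¹)).sub (hg i)
      convert this using 1; funext ω; simp only [Pi.sub_apply, div_eq_inv_mul]
    have hdq : ∫ ω, (ψ (θ (h' • evec i) ω) - ψ ω) / h' ∂μ = 0 := by
      simp_rw [div_eq_inv_mul]
      rw [integral_const_mul, integral_sub (hψθ.integrable one_le_two) (hψ.integrable one_le_two)]
      have : ∫ ω, ψ (θ (h' • evec i) ω) ∂μ = ∫ ω, ψ ω ∂μ := by
        rw [← integral_map (hmp (h' • evec i)).measurable.aemeasurable
          ((hmp (h' • evec i)).map_eq.symm ▸ hψ.aestronglyMeasurable),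
          (hmp (h' • evec i)).map_eq]
      rw [this]; ring
    have hint : ∫ ω, ((ψ (θ (h' • evec i) ω) - ψ ω) / h' - g ω i) ∂μ = -m := by
      rw [integral_sub (((hψθ.sub hψ).const_mul (h'⁻¹)).integrable one_le_two |>.congr
        (ae_of_all _ fun ω => by simp [div_eq_inv_mul])) ((hg i).integrable one_le_two), hdq]
      simp [hm]
    calc m ^ 2 = (∫ ω, ((ψ (θ (h' • evec i) ω) - ψ ω) / h' - g ω i) ∂μ) ^ 2 := by
          rw [hint]; ring
      _ ≤ _ := sq_integral_le hF
  have hev : ∀ᶠ h' in 𝓝[≠] (0:ℝ),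
      m ^ 2 ≤ ∫ ω, ((ψ (θ (h' • evec i) ω) - ψ ω) / h' - g ω i) ^ 2 ∂μ := by
    filter_upwards [eventually_mem_nhdsWithin] with h' hh'
    exact key h' hh'
  have hle : m ^ 2 ≤ 0 :=
    le_of_tendsto_of_tendsto tendsto_const_nhds (hder i) hev
  nlinarith [sq_nonneg m]

lemma dotp_mvec_integrable [IsProbabilityMeasure μ] {β : ℝ} {A : Ω → Fin d → Fin d → ℝ}
    (hA : Measurable A) (hb : ∀ᵐ ω ∂μ, ∀ i j, |A ω i j| ≤ β)
    {v w : Ω → Fin d → ℝ} (hv : ∀ i, MemLp (fun ω => v ω i) 2 μ)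
    (hw : ∀ i, MemLp (fun ω => w ω i) 2 μ) :
    Integrable (fun ω => dotp (v ω) (mvec (A ω) (w ω))) μ := by
  simp only [dotp, mvec, Finset.mul_sum]
  apply integrable_finset_sum
  intro i _
  apply integrable_finset_sum
  intro j _
  have hAw : MemLp (fun ω => A ω i j * w ω j) 2 μ := by
    refine MemLp.of_le_mul (c := β) (hw j)
      ((((measurable_pi_apply j).comp ((measurable_pi_apply i).comp hA)).aestronglyMeasurable).mul
        (hw j).aestronglyMeasurable) ?_
    filter_upwards [hb] with ω hω
    simp only [Real.norm_eq_abs, abs_mul]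
    exact mul_le_mul_of_nonneg_right (hω i j) (abs_nonneg _)
  exact mul_int (hv i) hAw

end Helpers

/-- Proposition `prop:coerc`, case `k = 1`: energy identity for
`ξ·A_Tξ` and unconditional coercivity `ξ·A_Tξ ≥ α`, for `ξ' = ξ` a unit vector. -/
theorem coercivity_of_A_T
    {Ω : Type*} [MeasurableSpace Ω] (μ : Measure Ω) [IsProbabilityMeasure μ]
    {d : ℕ} (hd : 2 ≤ d) {α β : ℝ} (hα : 0 < α) (hαβ : α ≤ β)
    (θ : (Fin d → ℝ) → Ω → Ω) (hθ : ErgodicGroup μ θ)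
    (A : Ω → Fin d → Fin d → ℝ)
    (hAmeas : Measurable A) (hAell : ∀ᵐ ω ∂μ, MemEll α β (A ω))
    (ξ : Fin d → ℝ) (hξ : dotp ξ ξ = 1)
    -- regularized corrector and dual regularized corrector, both in direction `ξ`
    (φT φT' : ℝ → Ω → ℝ) (GφT GφT' : ℝ → Ω → Fin d → ℝ)
    (hφT : ∀ T > (0:ℝ), IsRegCorrector μ θ A ξ T (φT T) (GφT T))
    (hφT' : ∀ T > (0:ℝ),
      IsRegCorrector μ θ (fun ω => mtrans (A ω)) ξ T (φT' T) (GφT' T)) :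
    ∀ T > (0:ℝ),
      (∫ ω, dotp (ξ + GφT' T ω) (mvec (A ω) (ξ + GφT T ω)) ∂μ
        = (1/2) * ∫ ω, dotp (ξ + GφT T ω) (mvec (A ω) (ξ + GφT T ω)) ∂μ
          + (1/2) * ∫ ω, dotp (ξ + GφT' T ω) (mvec (A ω) (ξ + GφT' T ω)) ∂μ
          + (2 * T)⁻¹ * ∫ ω, (φT T ω - φT' T ω) ^ 2 ∂μ) ∧
      α ≤ ∫ ω, dotp (ξ + GφT' T ω) (mvec (A ω) (ξ + GφT T ω)) ∂μ := by
  obtain ⟨hθ0, hθadd, hθmp, hθmeasJ, herg⟩ := hθ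
  intro T hT
  obtain ⟨⟨hφ2, hg2, hgd⟩, hweak⟩ := hφT T hT
  obtain ⟨⟨hφ'2, hg'2, hg'd⟩, hweak'⟩ := hφT' T hT
  have hT0 : T ≠ 0 := ne_of_gt hT
  have hβ0 : (0:ℝ) ≤ β := le_of_lt (lt_of_lt_of_le hα hαβ)
  have hbd : ∀ᵐ ω ∂μ, ∀ i j, |A ω i j| ≤ β :=
    hAell.mono fun ω hω i j => entries_bound hβ0 hω i j
  have hξg : ∀ i, MemLp (fun ω => (ξ + GφT T ω) i) 2 μ := fun i => by
    exact (memLp_const (ξ i)).add (hg2 i)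
  have hξg' : ∀ i, MemLp (fun ω => (ξ + GφT' T ω) i) 2 μ := fun i => by
    exact (memLp_const (ξ i)).add (hg'2 i)
  have hξc : ∀ i : Fin d, MemLp (fun _ : Ω => ξ i) 2 μ := fun i => memLp_const _
  -- integrability of all the quadratic terms
  have Imix : Integrable (fun ω => dotp (ξ + GφT' T ω) (mvec (A ω) (ξ + GφT T ω))) μ :=
    dotp_mvec_integrable hAmeas hbd hξg' hξg
  have IE1 : Integrable (fun ω => dotp (ξ + GφT T ω) (mvec (A ω) (ξ + GφT T ω))) μ :=
    dotp_mvec_integrable hAmeas hbd hξg hξg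
  have IE2 : Integrable (fun ω => dotp (ξ + GφT' T ω) (mvec (A ω) (ξ + GφT' T ω))) μ :=
    dotp_mvec_integrable hAmeas hbd hξg' hξg'
  have Ia : Integrable (fun ω => dotp ξ (mvec (A ω) (ξ + GφT T ω))) μ :=
    dotp_mvec_integrable hAmeas hbd hξc hξg
  have Ib : Integrable (fun ω => dotp (ξ + GφT' T ω) (mvec (A ω) ξ)) μ :=
    dotp_mvec_integrable hAmeas hbd hξg' hξc
  have Ig'A : Integrable (fun ω => dotp (GφT' T ω) (mvec (A ω) (ξ + GφT T ω))) μ :=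
    dotp_mvec_integrable hAmeas hbd hg'2 hξg
  have IgA : Integrable (fun ω => dotp (GφT T ω) (mvec (A ω) (ξ + GφT T ω))) μ :=
    dotp_mvec_integrable hAmeas hbd hg2 hξg
  have IAg : Integrable (fun ω => dotp (ξ + GφT' T ω) (mvec (A ω) (GφT T ω))) μ :=
    dotp_mvec_integrable hAmeas hbd hξg' hg2
  have IAg' : Integrable (fun ω => dotp (ξ + GφT' T ω) (mvec (A ω) (GφT' T ω))) μ :=
    dotp_mvec_integrable hAmeas hbd hξg' hg'2
  -- the four weak formulations
  have W1 := hweak (φT' T) (GφT' T) ⟨hφ'2, hg'2, hg'd⟩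
  have W2 := hweak (φT T) (GφT T) ⟨hφ2, hg2, hgd⟩
  have W3 := hweak' (φT T) (GφT T) ⟨hφ2, hg2, hgd⟩
  have W4 := hweak' (φT' T) (GφT' T) ⟨hφ'2, hg'2, hg'd⟩
  simp only [dotp_mtrans] at W3 W4
  have Iprod : Integrable (fun ω => T⁻¹ * φT T ω * φT' T ω) μ := by
    have := (mul_int hφ2 hφ'2).const_mul T⁻¹
    simpa [mul_assoc] using this
  have Iprod2 : Integrable (fun ω => T⁻¹ * φT T ω * φT T ω) μ := by
    have := (mul_int hφ2 hφ2).const_mul T⁻¹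
    simpa [mul_assoc] using this
  have Iprod3 : Integrable (fun ω => T⁻¹ * φT' T ω * φT T ω) μ := by
    have := (mul_int hφ'2 hφ2).const_mul T⁻¹
    simpa [mul_assoc] using this
  have Iprod4 : Integrable (fun ω => T⁻¹ * φT' T ω * φT' T ω) μ := by
    have := (mul_int hφ'2 hφ'2).const_mul T⁻¹
    simpa [mul_assoc] using this
  rw [integral_add Iprod Ig'A] at W1
  rw [integral_add Iprod2 IgA] at W2
  rw [integral_add Iprod3 IAg] at W3
  rw [integral_add Iprod4 IAg'] at W4
  have hconst : ∀ f : Ω → ℝ, ∫ ω, T⁻¹ * f ω ∂μ = T⁻¹ * ∫ ω, f ω ∂μ := fun f =>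
    integral_const_mul _ _
  simp only [mul_assoc, integral_const_mul] at W1 W2 W3 W4
  have hrr : ∫ ω, φT' T ω * φT T ω ∂μ = ∫ ω, φT T ω * φT' T ω ∂μ := by
    simp_rw [mul_comm (φT' T _) (φT T _)]
  rw [hrr] at W3
  -- decompositions
  have D1 : ∫ ω, dotp (ξ + GφT' T ω) (mvec (A ω) (ξ + GφT T ω)) ∂μ
      = (∫ ω, dotp ξ (mvec (A ω) (ξ + GφT T ω)) ∂μ)
        + ∫ ω, dotp (GφT' T ω) (mvec (A ω) (ξ + GφT T ω)) ∂μ := by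
    simp_rw [dotp_add_left]; exact integral_add Ia Ig'A
  have D2 : ∫ ω, dotp (ξ + GφT T ω) (mvec (A ω) (ξ + GφT T ω)) ∂μ
      = (∫ ω, dotp ξ (mvec (A ω) (ξ + GφT T ω)) ∂μ)
        + ∫ ω, dotp (GφT T ω) (mvec (A ω) (ξ + GφT T ω)) ∂μ := by
    simp_rw [dotp_add_left]; exact integral_add Ia IgA
  have D3 : ∫ ω, dotp (ξ + GφT' T ω) (mvec (A ω) (ξ + GφT T ω)) ∂μ
      = (∫ ω, dotp (ξ + GφT' T ω) (mvec (A ω) ξ) ∂μ)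
        + ∫ ω, dotp (ξ + GφT' T ω) (mvec (A ω) (GφT T ω)) ∂μ := by
    simp_rw [mvec_add, dotp_add_right]; exact integral_add Ib IAg
  have D4 : ∫ ω, dotp (ξ + GφT' T ω) (mvec (A ω) (ξ + GφT' T ω)) ∂μ
      = (∫ ω, dotp (ξ + GφT' T ω) (mvec (A ω) ξ) ∂μ)
        + ∫ ω, dotp (ξ + GφT' T ω) (mvec (A ω) (GφT' T ω)) ∂μ := by
    simp_rw [mvec_add, dotp_add_right]; exact integral_add Ib IAg'
  have hEmix1 : ∫ ω, dotp (ξ + GφT' T ω) (mvec (A ω) (ξ + GφT T ω)) ∂μ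
      = (∫ ω, dotp ξ (mvec (A ω) (ξ + GφT T ω)) ∂μ)
        - T⁻¹ * ∫ ω, φT T ω * φT' T ω ∂μ := by
    rw [D1]; linarith [W1]
  have hE1 : ∫ ω, dotp (ξ + GφT T ω) (mvec (A ω) (ξ + GφT T ω)) ∂μ
      = (∫ ω, dotp ξ (mvec (A ω) (ξ + GφT T ω)) ∂μ)
        - T⁻¹ * ∫ ω, φT T ω * φT T ω ∂μ := by
    rw [D2]; linarith [W2]
  have hEmix2 : ∫ ω, dotp (ξ + GφT' T ω) (mvec (A ω) (ξ + GφT T ω)) ∂μ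
      = (∫ ω, dotp (ξ + GφT' T ω) (mvec (A ω) ξ) ∂μ)
        - T⁻¹ * ∫ ω, φT T ω * φT' T ω ∂μ := by
    rw [D3]; linarith [W3]
  have hE2 : ∫ ω, dotp (ξ + GφT' T ω) (mvec (A ω) (ξ + GφT' T ω)) ∂μ
      = (∫ ω, dotp (ξ + GφT' T ω) (mvec (A ω) ξ) ∂μ)
        - T⁻¹ * ∫ ω, φT' T ω * φT' T ω ∂μ := by
    rw [D4]; linarith [W4]
  have hsq : ∫ ω, (φT T ω - φT' T ω) ^ 2 ∂μ
      = (∫ ω, φT T ω * φT T ω ∂μ) - 2 * (∫ ω, φT T ω * φT' T ω ∂μ)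
        + ∫ ω, φT' T ω * φT' T ω ∂μ := by
    have he : ∀ ω, (φT T ω - φT' T ω) ^ 2
        = φT T ω * φT T ω - 2 * (φT T ω * φT' T ω) + φT' T ω * φT' T ω := fun ω => by ring
    simp_rw [he]
    have h1 : Integrable (fun ω => φT T ω * φT T ω - 2 * (φT T ω * φT' T ω)) μ :=
      (mul_int hφ2 hφ2).sub ((mul_int hφ2 hφ'2).const_mul 2)
    rw [integral_add h1 (mul_int hφ'2 hφ'2),
      integral_sub (mul_int hφ2 hφ2) ((mul_int hφ2 hφ'2).const_mul 2), integral_const_mul]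
  have h2T : (2 * T)⁻¹ = T⁻¹ / 2 := by
    field_simp
  have hident : ∫ ω, dotp (ξ + GφT' T ω) (mvec (A ω) (ξ + GφT T ω)) ∂μ
      = (1/2) * ∫ ω, dotp (ξ + GφT T ω) (mvec (A ω) (ξ + GφT T ω)) ∂μ
        + (1/2) * ∫ ω, dotp (ξ + GφT' T ω) (mvec (A ω) (ξ + GφT' T ω)) ∂μ
        + (2 * T)⁻¹ * ∫ ω, (φT T ω - φT' T ω) ^ 2 ∂μ := by
    rw [hsq, h2T]
    linear_combination (1/2 : ℝ) * hEmix1 + (1/2 : ℝ) * hEmix2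
      - (1/2 : ℝ) * hE1 - (1/2 : ℝ) * hE2
  refine ⟨hident, ?_⟩
  -- coercivity
  have hmean : ∀ i, ∫ ω, GφT T ω i ∂μ = 0 := grad_mean_zero hθmp ⟨hφ2, hg2, hgd⟩
  have hmean' : ∀ i, ∫ ω, GφT' T ω i ∂μ = 0 := grad_mean_zero hθmp ⟨hφ'2, hg'2, hg'd⟩
  have hlow : ∀ (g : Ω → Fin d → ℝ), (∀ i, MemLp (fun ω => g ω i) 2 μ) →
      (∀ i, ∫ ω, g ω i ∂μ = 0) →
      Integrable (fun ω => dotp (ξ + g ω) (mvec (A ω) (ξ + g ω))) μ →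
      α ≤ ∫ ω, dotp (ξ + g ω) (mvec (A ω) (ξ + g ω)) ∂μ := by
    intro g hgl2 hgm IE
    have hξgl : ∀ i, MemLp (fun ω => (ξ + g ω) i) 2 μ := fun i => by
      exact (memLp_const (ξ i)).add (hgl2 i)
    have Ivv : Integrable (fun ω => dotp (ξ + g ω) (ξ + g ω)) μ := by
      simp only [dotp]
      apply integrable_finset_sum
      intro i _
      exact mul_int (hξgl i) (hξgl i)
    have hptw : (fun ω => α * dotp (ξ + g ω) (ξ + g ω))
        ≤ᵐ[μ] fun ω => dotp (ξ + g ω) (mvec (A ω) (ξ + g ω)) :=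
      hAell.mono fun ω hω => hω.1 _
    have hint := integral_mono_ae (Ivv.const_mul α) IE hptw
    rw [integral_const_mul] at hint
    have Iξg : Integrable (fun ω => dotp ξ (g ω)) μ := by
      simp only [dotp]
      apply integrable_finset_sum
      intro i _
      exact ((hgl2 i).integrable one_le_two).const_mul (ξ i)
    have Igg : Integrable (fun ω => dotp (g ω) (g ω)) μ := by
      simp only [dotp]
      apply integrable_finset_sum
      intro i _
      exact mul_int (hgl2 i) (hgl2 i)
    have hzero : ∫ ω, dotp ξ (g ω) ∂μ = 0 := by
      simp only [dotp]
      rw [integral_finset_sum _ (fun i _ => ((hgl2 i).integrable one_le_two).const_mul (ξ i))]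
      simp [integral_const_mul, hgm]
    have he : ∀ ω, dotp (ξ + g ω) (ξ + g ω)
        = dotp ξ ξ + 2 * dotp ξ (g ω) + dotp (g ω) (g ω) := by
      intro ω
      rw [dotp_add_left, dotp_add_right, dotp_add_right, dotp_comm (g ω) ξ]
      ring
    have hvv : 1 ≤ ∫ ω, dotp (ξ + g ω) (ξ + g ω) ∂μ := by
      have hrw : ∫ ω, dotp (ξ + g ω) (ξ + g ω) ∂μ
          = ∫ ω, (dotp ξ ξ + 2 * dotp ξ (g ω) + dotp (g ω) (g ω)) ∂μ := by
        simp_rw [he]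
      have hI0 : Integrable (fun _ : Ω => dotp ξ ξ) μ := integrable_const _
      have hI2 : Integrable (fun ω => 2 * dotp ξ (g ω)) μ := Iξg.const_mul 2
      have hI1 : Integrable (fun ω => dotp ξ ξ + 2 * dotp ξ (g ω)) μ := hI0.add hI2
      rw [hrw, integral_add hI1 Igg, integral_add hI0 hI2, integral_const,
        integral_const_mul, hzero, hξ]
      have := integral_nonneg (f := fun ω => dotp (g ω) (g ω)) (fun ω => dotp_self_nonneg (g ω)) (μ := μ)
      simp
      linarith
    calc α = α * 1 := (mul_one α).symm
      _ ≤ α * ∫ ω, dotp (ξ + g ω) (ξ + g ω) ∂μ :=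
          mul_le_mul_of_nonneg_left hvv hα.le
      _ ≤ _ := hint
  have hE1α : α ≤ ∫ ω, dotp (ξ + GφT T ω) (mvec (A ω) (ξ + GφT T ω)) ∂μ :=
    hlow (GφT T) hg2 hmean IE1
  have hE2α : α ≤ ∫ ω, dotp (ξ + GφT' T ω) (mvec (A ω) (ξ + GφT' T ω)) ∂μ :=
    hlow (GφT' T) hg'2 hmean' IE2
  have hS : 0 ≤ (2 * T)⁻¹ * ∫ ω, (φT T ω - φT' T ω) ^ 2 ∂μ :=
    mul_nonneg (by positivity) (integral_nonneg fun ω => sq_nonneg _)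
  linarith [hident, hE1α, hE2α, hS]
end
end

section
/- For T > 0 define ψ_{T,1} : (0,∞) → ℝ by ψ_{T,1}(λ) = 1/(T^{-1}+λ), and inductively ψ_{T,k+1} := (2^k ψ_{2T,k} − ψ_{T,k})/(2^k − 1) for k ≥ 1. Then for all integers k ≥ 1, all T > 0, and all λ > 0: 1/λ − ψ_{T,k}(λ) = 2^{-k(k-1)/2} T^{-k} / (λ ∏_{i=0}^{k-1} ((2^iT)^{-1}+λ)). -/
noncomputable section

/-- The Richardson extrapolations `ψ_{T,k}` of the resolvent function
`λ ↦ 1/(T⁻¹ + λ)`. -/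
def psiRes : ℕ → ℝ → ℝ → ℝ :=
  fun k T => rich (fun T : ℝ => fun l : ℝ => (T⁻¹ + l)⁻¹) k T

lemma psiRes_one (T l : ℝ) : psiRes 1 T l = (T⁻¹ + l)⁻¹ := by
  simp [psiRes, rich]

lemma psiRes_succ (k : ℕ) (hk : 1 ≤ k) (T l : ℝ) :
    psiRes (k+1) T l
      = ((2:ℝ)^k - 1)⁻¹ * ((2:ℝ)^k * psiRes k (2*T) l - psiRes k T l) := by
  obtain ⟨m, rfl⟩ : ∃ m, k = m + 1 := ⟨k - 1, by omega⟩
  simp [psiRes, rich, smul_eq_mul]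

lemma exp_step (k : ℕ) (hk : 1 ≤ k) :
    (k+1) * ((k+1) - 1) / 2 = k * (k - 1) / 2 + k := by
  obtain ⟨j, rfl⟩ : ∃ j, k = j + 1 := ⟨k - 1, by omega⟩
  have h1 : (j+2) * (j+1) = (j+1) * j + (j+1) * 2 := by ring
  simp only [Nat.add_sub_cancel]
  rw [h1, Nat.add_mul_div_right _ _ (by norm_num : 0 < 2)]

/-- identity `eq:induc-psi`: for all `k ≥ 1`, `T > 0`, `λ > 0`,
`1/λ − ψ_{T,k}(λ) = 2^{−k(k−1)/2} T^{−k} / (λ ∏_{i=0}^{k-1} ((2^iT)^{-1} + λ))`. -/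
theorem resolvent_extrapolation_identity :
    ∀ (k : ℕ), 1 ≤ k → ∀ (T : ℝ), 0 < T → ∀ (l : ℝ), 0 < l →
      l⁻¹ - psiRes k T l
        = ((2:ℝ) ^ (k * (k - 1) / 2))⁻¹ * (T ^ k)⁻¹ *
            (l * ∏ i ∈ Finset.range k, (((2:ℝ) ^ i * T)⁻¹ + l))⁻¹ := by
  intro k hk
  induction k, hk using Nat.le_induction with
  | base =>
      intro T hT l hl
      rw [psiRes_one]
      simp only [Finset.range_one, Finset.prod_singleton, pow_zero, one_mul, pow_one,
        Nat.zero_div, inv_one]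
      have h1 : T⁻¹ + l ≠ 0 := by positivity
      field_simp
      norm_num
  | succ k hk ih =>
      intro T hT l hl
      have hT2 : (0:ℝ) < 2 * T := by linarith
      have e1 := ih T hT l hl
      have e2 := ih (2*T) hT2 l hl
      set a : ℕ → ℝ := fun i => ((2:ℝ)^i * T)⁻¹ + l with ha
      have hapos : ∀ i, 0 < a i := fun i => by
        have : (0:ℝ) < (2:ℝ)^i * T := by positivity
        simp only [ha]; positivity
      have hprod2 : (∏ i ∈ Finset.range k, (((2:ℝ)^i * (2*T))⁻¹ + l))
          = ∏ i ∈ Finset.range k, a (i+1) := by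
        refine Finset.prod_congr rfl fun i _ => ?_
        simp only [ha, pow_succ]
        ring_nf
      rw [hprod2] at e2
      set Q : ℝ := ∏ i ∈ Finset.range k, a i with hQ
      set P2 : ℝ := ∏ i ∈ Finset.range k, a (i+1) with hP2
      have hQpos : 0 < Q := Finset.prod_pos fun i _ => hapos i
      have hP2pos : 0 < P2 := Finset.prod_pos fun i _ => hapos (i+1)
      have hrel : Q * a k = a 0 * P2 := by
        have h1 : (∏ i ∈ Finset.range (k+1), a i) = Q * a k :=
          Finset.prod_range_succ a k
        have h2 : (∏ i ∈ Finset.range (k+1), a i) = P2 * a 0 :=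
          Finset.prod_range_succ' a k
        rw [← h1, h2]; ring
      have hprodgoal : (∏ i ∈ Finset.range (k+1), (((2:ℝ)^i * T)⁻¹ + l)) = Q * a k :=
        Finset.prod_range_succ a k
      rw [psiRes_succ k hk, hprodgoal, exp_step k hk]
      have hu : (2:ℝ)^k - 1 ≠ 0 := by
        have : (1:ℝ) < 2^k := one_lt_pow₀ (by norm_num) (by omega)
        linarith
      -- express l⁻¹ - psi_{k+1} via the two errors
      have key : l⁻¹ - ((2:ℝ)^k - 1)⁻¹ * ((2:ℝ)^k * psiRes k (2*T) l - psiRes k T l)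
          = ((2:ℝ)^k - 1)⁻¹ * ((2:ℝ)^k * (l⁻¹ - psiRes k (2*T) l)
              - (l⁻¹ - psiRes k T l)) := by
        field_simp
        ring
      rw [key, e1, e2]
      -- now pure algebra
      have ha0 : a 0 = T⁻¹ + l := by simp [ha]
      have hak : a k = ((2:ℝ)^k * T)⁻¹ + l := rfl
      have hakpos := hapos k
      have ha0pos := hapos 0
      have hTk : ((2:ℝ)*T)^k = 2^k * T^k := by rw [mul_pow]
      have hQval : Q = a 0 * P2 / a k := by
        field_simp [hakpos.ne'] at hrel ⊢
        linarith [hrel]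
      rw [hTk, hQval, ha0, hak]
      have h2k : ((2:ℝ)^k) ≠ 0 := by positivity
      have hTne : T ≠ 0 := hT.ne'
      have hlne : l ≠ 0 := hl.ne'
      have hakne : ((2:ℝ)^k * T)⁻¹ + l ≠ 0 := by rw [← hak]; exact hakpos.ne'
      have ha0ne : T⁻¹ + l ≠ 0 := by rw [← ha0]; exact ha0pos.ne'
      field_simp
      ring
end
end
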